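/- Let p, q ≥ 2 be coprime integers and let k be an integer with 0 < k < pq such that p does not divide k and q does not divide k. Set z₀ = iπk/(pq) ∈ ℂ. Then the function z ↦ (z − z₀) · 2·sinh(pz)·sinh(qz)/sinh(pqz) tends, as z → z₀ with z ≠ z₀, to the value (−1)^{k−1}·(2/(pq))·sin(πk/p)·sin(πk/q), and this value is nonzero. -/

import Mathlib

open Real Complex Filter in
/-- For `0 < k < pq` with `p ∤ k` and `q ∤ k`, the function
`z ↦ (z - z₀) · 2 sinh(pz) sinh(qz)/sinh(pqz)`, where `z₀ = iπk/(pq)`, tends (as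
`z → z₀`, `z ≠ z₀`) to `(-1)^{k-1} (2/(pq)) sin(πk/p) sin(πk/q)`, which is nonzero. -/
theorem residue_abelian_torsion (p q : ℤ) (hp : 2 ≤ p) (hq : 2 ≤ q)
    (hpq : IsCoprime p q) (k : ℤ) (hk0 : 0 < k) (hk1 : k < p * q)
    (hkp : ¬ p ∣ k) (hkq : ¬ q ∣ k) :
    Tendsto
      (fun z : ℂ =>
        (z - Complex.I * (π : ℂ) * (k : ℂ) / ((p : ℂ) * q)) *
          (2 * Complex.sinh ((p : ℂ) * z) * Complex.sinh ((q : ℂ) * z) /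
            Complex.sinh ((p : ℂ) * q * z)))
      (nhdsWithin (Complex.I * (π : ℂ) * (k : ℂ) / ((p : ℂ) * q))
        {Complex.I * (π : ℂ) * (k : ℂ) / ((p : ℂ) * q)}ᶜ)
      (nhds ((-1 : ℂ) ^ (k - 1) * (2 / ((p : ℂ) * q)) *
        (Real.sin (π * k / p) : ℂ) * (Real.sin (π * k / q) : ℂ))) ∧
    (-1 : ℂ) ^ (k - 1) * (2 / ((p : ℂ) * q)) *
        (Real.sin (π * k / p) : ℂ) * (Real.sin (π * k / q) : ℂ) ≠ 0 := by
  have hp0 : (p : ℂ) ≠ 0 := by exact_mod_cast (by omega : p ≠ 0)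
  have hq0 : (q : ℂ) ≠ 0 := by exact_mod_cast (by omega : q ≠ 0)
  have hpR : (p : ℝ) ≠ 0 := by exact_mod_cast (by omega : p ≠ 0)
  have hqR : (q : ℝ) ≠ 0 := by exact_mod_cast (by omega : q ≠ 0)
  set z₀ : ℂ := Complex.I * (π : ℂ) * (k : ℂ) / ((p : ℂ) * q) with hz₀
  have hpqz : (p : ℂ) * q * z₀ = (k : ℂ) * π * Complex.I := by
    rw [hz₀]; field_simp
  have hpz : (p : ℂ) * z₀ = ((π * k / q : ℝ) : ℂ) * Complex.I := by
    rw [hz₀]; push_cast; field_simp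
  have hqz : (q : ℂ) * z₀ = ((π * k / p : ℝ) : ℂ) * Complex.I := by
    rw [hz₀]; push_cast; field_simp
  have hsinh0 : Complex.sinh ((p : ℂ) * q * z₀) = 0 := by
    rw [hpqz, Complex.sinh_mul_I, Complex.sin_int_mul_pi, zero_mul]
  have hcosh : Complex.cosh ((p : ℂ) * q * z₀) = (-1 : ℂ) ^ k := by
    rw [hpqz, Complex.cosh_mul_I]
    have hR : Real.cos ((k : ℝ) * π) = (-1 : ℝ) ^ k := by
      simpa using Real.cos_add_int_mul_pi 0 k
    calc Complex.cos ((k : ℂ) * π) = ((Real.cos ((k : ℝ) * π) : ℝ) : ℂ) := by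
          rw [Complex.ofReal_cos]; push_cast; ring_nf
      _ = (-1 : ℂ) ^ k := by rw [hR]; push_cast; ring
  have hsinhp : Complex.sinh ((p : ℂ) * z₀) =
      ((Real.sin (π * k / q) : ℝ) : ℂ) * Complex.I := by
    rw [hpz, Complex.sinh_mul_I, Complex.ofReal_sin]
  have hsinhq : Complex.sinh ((q : ℂ) * z₀) =
      ((Real.sin (π * k / p) : ℝ) : ℂ) * Complex.I := by
    rw [hqz, Complex.sinh_mul_I, Complex.ofReal_sin]
  have hsinp : Real.sin (π * k / p) ≠ 0 := by
    intro h
    obtain ⟨n, hn⟩ := Real.sin_eq_zero_iff.mp h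
    apply hkp
    refine ⟨n, ?_⟩
    have h2 : π * ((p : ℝ) * n) = π * k := by
      have := div_eq_iff hpR |>.mp hn.symm
      linarith [this]
    have h3 : ((p * n : ℤ) : ℝ) = ((k : ℤ) : ℝ) := by
      push_cast
      exact mul_left_cancel₀ Real.pi_ne_zero h2
    exact_mod_cast h3.symm
  have hsinq : Real.sin (π * k / q) ≠ 0 := by
    intro h
    obtain ⟨n, hn⟩ := Real.sin_eq_zero_iff.mp h
    apply hkq
    refine ⟨n, ?_⟩
    have h2 : π * ((q : ℝ) * n) = π * k := by
      have := div_eq_iff hqR |>.mp hn.symm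
      linarith [this]
    have h3 : ((q * n : ℤ) : ℝ) = ((k : ℤ) : ℝ) := by
      push_cast
      exact mul_left_cancel₀ Real.pi_ne_zero h2
    exact_mod_cast h3.symm
  have hL0 : ((p : ℂ) * q * (-1 : ℂ) ^ k) ≠ 0 :=
    mul_ne_zero (mul_ne_zero hp0 hq0) (zpow_ne_zero _ (by norm_num))
  have hderiv : HasDerivAt (fun z : ℂ => Complex.sinh ((p : ℂ) * q * z))
      ((p : ℂ) * q * (-1 : ℂ) ^ k) z₀ := by
    have h1 : HasDerivAt (fun z : ℂ => (p : ℂ) * q * z) ((p : ℂ) * q) z₀ := by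
      simpa using (hasDerivAt_id z₀).const_mul ((p : ℂ) * q)
    have h2 := (Complex.hasDerivAt_sinh ((p : ℂ) * q * z₀)).comp z₀ h1
    rw [hcosh, mul_comm ((-1 : ℂ) ^ k)] at h2
    exact h2
  have hslope : Tendsto (fun z : ℂ => Complex.sinh ((p : ℂ) * q * z) / (z - z₀))
      (nhdsWithin z₀ {z₀}ᶜ) (nhds ((p : ℂ) * q * (-1 : ℂ) ^ k)) := by
    have h := hasDerivAt_iff_tendsto_slope.mp hderiv
    refine h.congr fun z => ?_
    simp [slope_def_field, hsinh0]
  have hinv : Tendsto (fun z : ℂ => (z - z₀) / Complex.sinh ((p : ℂ) * q * z))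
      (nhdsWithin z₀ {z₀}ᶜ) (nhds (((p : ℂ) * q * (-1 : ℂ) ^ k)⁻¹)) := by
    refine (hslope.inv₀ hL0).congr fun z => ?_
    rw [inv_div]
  have hcont : Tendsto (fun z : ℂ => 2 * Complex.sinh ((p : ℂ) * z) * Complex.sinh ((q : ℂ) * z))
      (nhdsWithin z₀ {z₀}ᶜ)
      (nhds (2 * Complex.sinh ((p : ℂ) * z₀) * Complex.sinh ((q : ℂ) * z₀))) := by
    apply Tendsto.mono_left _ nhdsWithin_le_nhds
    refine Continuous.tendsto ?_ z₀
    exact (continuous_const.mul (Complex.continuous_sinh.comp (continuous_const.mul continuous_id))).mul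
      (Complex.continuous_sinh.comp (continuous_const.mul continuous_id))
  have hmul := hinv.mul hcont
  have hval : ((p : ℂ) * q * (-1 : ℂ) ^ k)⁻¹ *
      (2 * Complex.sinh ((p : ℂ) * z₀) * Complex.sinh ((q : ℂ) * z₀)) =
      (-1 : ℂ) ^ (k - 1) * (2 / ((p : ℂ) * q)) *
        (Real.sin (π * k / p) : ℂ) * (Real.sin (π * k / q) : ℂ) := by
    have hu : ((-1 : ℂ) ^ k) * ((-1 : ℂ) ^ k) = 1 := by
      rw [← zpow_add₀ (by norm_num : (-1 : ℂ) ≠ 0)]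
      have h2 : (-1 : ℂ) ^ (k + k) = ((-1 : ℂ) ^ (2 : ℤ)) ^ k := by
        rw [← zpow_mul]; ring_nf
      rw [h2]; norm_num
    have hu' : ((-1 : ℂ) ^ k)⁻¹ = (-1 : ℂ) ^ k := inv_eq_of_mul_eq_one_right hu
    have hk1' : (-1 : ℂ) ^ (k - 1) = -((-1 : ℂ) ^ k) := by
      rw [zpow_sub₀ (by norm_num : (-1 : ℂ) ≠ 0), zpow_one]
      field_simp
    rw [hsinhp, hsinhq, mul_inv, hu', hk1']
    have hI : Complex.I * Complex.I = -1 := Complex.I_mul_I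
    linear_combination (((p : ℂ) * q)⁻¹ * (-1 : ℂ) ^ k * 2 *
      (Real.sin (π * k / q) : ℂ) * (Real.sin (π * k / p) : ℂ)) * hI
  constructor
  · rw [← hval]
    refine hmul.congr fun z => ?_
    ring
  · rw [← hval, mul_inv, hsinhp, hsinhq]
    refine mul_ne_zero (mul_ne_zero ?_ ?_) ?_
    · exact inv_ne_zero (mul_ne_zero hp0 hq0)
    · exact inv_ne_zero (zpow_ne_zero _ (by norm_num))
    · refine mul_ne_zero (mul_ne_zero ?_ ?_) ?_
      · norm_num
      · exact mul_ne_zero (Complex.ofReal_ne_zero.mpr hsinq) Complex.I_ne_zero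
      · exact mul_ne_zero (Complex.ofReal_ne_zero.mpr hsinp) Complex.I_ne_zero
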